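/- For every n ≥ 1, every finite simple graph G with chromatic number at least n and girth at least 2n−2 satisfies G ⇒ I_n. -/

import Mathlib

/-- An orientation of a simple graph `G`: an asymmetric relation `D` whose
symmetrization is exactly the adjacency relation of `G`. -/
def IsOrientation {V : Type*} (G : SimpleGraph V) (D : V → V → Prop) : Prop :=
  (∀ u v, ¬ (D u v ∧ D v u)) ∧ ∀ u v, G.Adj u v ↔ (D u v ∨ D v u)

/-- A digraph structure on a relation: no loops and no pairs of opposite arcs. -/
def IsDigraph {W : Type*} (E : W → W → Prop) : Prop :=
  ∀ u v, ¬ (E u v ∧ E v u)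

/-- `G ⇒ E`: every orientation `D` of `G` contains an isometric copy of the digraph `E`:
an injective map `f` inducing an isomorphism onto its image, preserving orientations,
such that distances (in the underlying undirected graphs) are preserved. -/
def IsoRamseyArrow {V W : Type*} (G : SimpleGraph V) (E : W → W → Prop) : Prop :=
  ∀ D : V → V → Prop, IsOrientation G D →
    ∃ f : W → V, Function.Injective f ∧
      (∀ u v, E u v ↔ D (f u) (f v)) ∧
      (∀ u v, (SimpleGraph.fromRel E).edist u v = G.edist (f u) (f v))

/-- The directed path `I n` on vertex set `Fin n`, with arcs `(i, i+1)`. -/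
def dirPath (n : ℕ) : Fin n → Fin n → Prop :=
  fun i j => (i : ℕ) + 1 = (j : ℕ)

open SimpleGraph

section Aux

variable {V : Type*}

/-- Walk built from a function `g : ℕ → V` with consecutive adjacencies. -/
def walkOfFun (G : SimpleGraph V) (g : ℕ → V) :
    ∀ m, (∀ i, i < m → G.Adj (g i) (g (i + 1))) → G.Walk (g 0) (g m)
  | 0, _ => SimpleGraph.Walk.nil
  | m + 1, h => (walkOfFun G g m fun i hi => h i (by omega)).concat (h m (by omega))

lemma walkOfFun_length (G : SimpleGraph V) (g : ℕ → V) (m : ℕ)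
    (h : ∀ i, i < m → G.Adj (g i) (g (i + 1))) : (walkOfFun G g m h).length = m := by
  induction m with
  | zero => rfl
  | succ m ih => rw [walkOfFun, SimpleGraph.Walk.length_concat, ih]

lemma walkOfFun_support (G : SimpleGraph V) (g : ℕ → V) (m : ℕ)
    (h : ∀ i, i < m → G.Adj (g i) (g (i + 1))) :
    (walkOfFun G g m h).support = (List.range (m + 1)).map g := by
  induction m with
  | zero => rfl
  | succ m ih =>
    rw [walkOfFun, SimpleGraph.Walk.support_concat, ih,
      List.range_succ (n := m + 1), List.map_append]
    rfl

lemma exists_walk_seg (G : SimpleGraph V) (g : ℕ → V) (a b : ℕ) (hab : a ≤ b)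
    (h : ∀ i, a ≤ i → i < b → G.Adj (g i) (g (i + 1))) :
    ∃ p : G.Walk (g a) (g b), p.length = b - a ∧
      p.support = (List.range (b - a + 1)).map (fun t => g (a + t)) := by
  have h' : ∀ i, i < b - a → G.Adj (g (a + i)) (g (a + i + 1)) := fun i hi => by
    have := h (a + i) (by omega) (by omega)
    exact this
  refine ⟨(walkOfFun G (fun t => g (a + t)) (b - a) h').copy (congrArg g (by omega))
    (congrArg g (by omega)), ?_, ?_⟩
  · rw [SimpleGraph.Walk.length_copy, walkOfFun_length]
  · rw [SimpleGraph.Walk.support_copy, walkOfFun_support]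

/-- Two distinct (different length) paths between the same endpoints force a short cycle. -/
lemma egirth_le_two_paths {G : SimpleGraph V} {a b : V} (p q : G.Walk a b)
    (hp : p.IsPath) (hq : q.IsPath) (hne : p.length ≠ q.length) :
    G.egirth ≤ (p.length + q.length : ℕ) := by
  classical
  set s : Set (Sym2 V) := {e | e ∈ p.edges ∨ e ∈ q.edges} with hs
  have hsub : s ⊆ G.edgeSet := by
    rintro e (he | he)
    · exact p.edges_subset_edgeSet he
    · exact q.edges_subset_edgeSet he
  set G' := SimpleGraph.fromEdgeSet s with hG'
  have hle : G' ≤ G := by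
    rw [hG']
    calc SimpleGraph.fromEdgeSet s ≤ SimpleGraph.fromEdgeSet G.edgeSet :=
          SimpleGraph.fromEdgeSet_mono hsub
      _ = G := G.fromEdgeSet_edgeSet
  have hmem : ∀ e ∈ s, e ∈ G'.edgeSet := by
    intro e he
    rw [hG', SimpleGraph.edgeSet_fromEdgeSet]
    exact ⟨he, G.not_isDiag_of_mem_edgeSet (hsub he)⟩
  have hpe : ∀ e ∈ p.edges, e ∈ G'.edgeSet := fun e he => hmem e (Or.inl he)
  have hqe : ∀ e ∈ q.edges, e ∈ G'.edgeSet := fun e he => hmem e (Or.inr he)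
  have hnA : ¬ G'.IsAcyclic := by
    intro hA
    have heq := hA.path_unique ⟨p.transfer G' hpe, hp.transfer hpe⟩
      ⟨q.transfer G' hqe, hq.transfer hqe⟩
    have : (p.transfer G' hpe).length = (q.transfer G' hqe).length :=
      congrArg SimpleGraph.Walk.length (congrArg Subtype.val heq)
    rw [SimpleGraph.Walk.length_transfer, SimpleGraph.Walk.length_transfer] at this
    exact hne this
  rw [SimpleGraph.IsAcyclic] at hnA
  push_neg at hnA
  obtain ⟨v, c, hc⟩ := hnA
  have hlen : c.length ≤ p.length + q.length := by
    have hnodup : c.edges.Nodup := hc.isCircuit.isTrail.edges_nodup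
    have hsubl : c.edges ⊆ p.edges ++ q.edges := by
      intro e he
      have h1 := c.edges_subset_edgeSet he
      rw [hG', SimpleGraph.edgeSet_fromEdgeSet] at h1
      rcases h1.1 with h | h
      · exact List.mem_append.mpr (Or.inl h)
      · exact List.mem_append.mpr (Or.inr h)
    have := (hnodup.subperm hsubl).length_le
    rw [List.length_append, p.length_edges, q.length_edges, c.length_edges] at this
    exact this
  have hcG : (c.mapLe hle).IsCycle := hc.mapLe hle
  have h1 : G.egirth ≤ ((c.mapLe hle).length : ℕ∞) :=
    SimpleGraph.le_egirth.mp le_rfl _ _ hcG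
  have h2 : (c.mapLe hle).length = c.length := SimpleGraph.Walk.length_map _ _
  refine h1.trans ?_
  rw [h2]
  exact_mod_cast hlen

/-- Lower bound on edist from an integer "Lipschitz" potential. -/
lemma le_edist_of_potential {W : Type*} {H : SimpleGraph W} (φ : W → ℤ)
    (hφ : ∀ a b, H.Adj a b → (φ a - φ b).natAbs ≤ 1) (u v : W) :
    (((φ u - φ v).natAbs : ℕ) : ℕ∞) ≤ H.edist u v := by
  by_cases hr : H.Reachable u v
  · obtain ⟨w, hw⟩ := hr.exists_walk_length_eq_edist
    rw [← hw]
    have key : ∀ {x y : W} (w : H.Walk x y), (φ x - φ y).natAbs ≤ w.length := by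
      intro x y w
      induction w with
      | nil => simp
      | cons h p ih =>
        have := hφ _ _ h
        rw [SimpleGraph.Walk.length_cons]
        omega
    exact_mod_cast key w
  · rw [SimpleGraph.edist_eq_top_of_not_reachable hr]
    exact le_top

end Aux

theorem stmt7 (n : ℕ) (hn : 1 ≤ n) (V : Type) [Fintype V] (G : SimpleGraph V)
    (hchi : (n : ℕ∞) ≤ G.chromaticNumber)
    (hgirth : ((2 * n - 2 : ℕ) : ℕ∞) ≤ G.egirth) :
    IsoRamseyArrow G (dirPath n) := by
  classical
  intro D hD
  -- Step 1 (Gallai–Roy): there is a D-chain of length n.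
  have key : ∃ l : List V, l.Chain' D ∧ l.length = n := by
    by_contra hno
    push_neg at hno
    have hlen : ∀ l : List V, l.Chain' D → l.length ≤ n - 1 := by
      intro l hl
      by_contra hlong
      push_neg at hlong
      exact hno (l.take n) (hl.take n) (by rw [List.length_take]; omega)
    set S : V → Set ℕ := fun v => {k | ∃ l : List V, l.Chain' D ∧ l.head? = some v ∧ l.length = k}
      with hS
    have hbdd : ∀ v, BddAbove (S v) := by
      intro v
      refine ⟨n - 1, ?_⟩
      rintro k ⟨l, hl, -, hk⟩
      exact hk ▸ hlen l hl
    have hmem1 : ∀ v, 1 ∈ S v := fun v => ⟨[v], List.isChain_singleton _, rfl, rfl⟩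
    set c : V → ℕ := fun v => sSup (S v) with hc
    have hc_mem : ∀ v, c v ∈ S v := fun v => Nat.sSup_mem ⟨1, hmem1 v⟩ (hbdd v)
    have hc1 : ∀ v, 1 ≤ c v := fun v => le_csSup (hbdd v) (hmem1 v)
    have hcn : ∀ v, c v ≤ n - 1 := by
      intro v
      obtain ⟨l, hl, -, hk⟩ := hc_mem v
      exact hk ▸ hlen l hl
    have hstep : ∀ u v, D u v → c v + 1 ≤ c u := by
      intro u v huv
      obtain ⟨l, hl, hh, hk⟩ := hc_mem v
      refine le_csSup (hbdd u) ⟨u :: l, ?_, rfl, by simp [hk]⟩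
      refine List.isChain_cons.mpr ?_
      refine ⟨fun y hy => ?_, hl⟩
      rw [hh] at hy
      cases hy
      exact huv
    have hcol : G.Colorable (n - 1) := by
      refine ⟨SimpleGraph.Coloring.mk
        (fun v => ⟨c v - 1, by have := hc1 v; have := hcn v; omega⟩) ?_⟩
      intro u v huv hEq
      have h1 := hc1 u
      have h2 := hc1 v
      have hne : c u ≠ c v := by
        rcases (hD.2 u v).mp huv with h | h
        · have := hstep u v h; omega
        · have := hstep v u h; omega
      have h3 : c u - 1 = c v - 1 := congrArg Fin.val hEq
      omega
    have hle := hcol.chromaticNumber_le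
    have : (n : ℕ∞) ≤ ((n - 1 : ℕ) : ℕ∞) := hchi.trans hle
    rw [Nat.cast_le] at this
    omega
  obtain ⟨l, hchain, hlength⟩ := key
  have hlpos : 0 < l.length := by omega
  haveI : Inhabited V := ⟨l.get ⟨0, hlpos⟩⟩
  set g : ℕ → V := fun i => l.getI i with hgdef
  have hget : ∀ i (h : i < n), g i = l.get ⟨i, by omega⟩ := by
    intro i h
    exact l.getI_eq_getElem (by omega)
  have hg : ∀ i, i + 1 < n → D (g i) (g (i + 1)) := by
    intro i h
    rw [hget i (by omega), hget (i + 1) h]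
    exact List.isChain_iff_getElem.mp hchain i (by omega)
  have hadj : ∀ i, i + 1 < n → G.Adj (g i) (g (i + 1)) := fun i h =>
    (hD.2 _ _).mpr (Or.inl (hg i h))
  have hadjseg : ∀ a b : ℕ, b < n → ∀ i, a ≤ i → i < b → G.Adj (g i) (g (i + 1)) :=
    fun a b hb i _ hib => hadj i (by omega)
  -- Step 2: injectivity of g on [0, n)
  have hinj : ∀ a b, a < b → b < n → g a ≠ g b := by
    intro a b hab hbn heq
    have hQ : ∃ k, 0 < k ∧ ∃ a, a + k < n ∧ g a = g (a + k) :=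
      ⟨b - a, by omega, a, by omega, by rw [heq]; congr 1; omega⟩
    obtain ⟨hmpos, a', ha'n, ha'eq⟩ := Nat.find_spec hQ
    set m := Nat.find hQ with hm
    have hmin : ∀ k, 0 < k → k < m → ∀ x, x + k < n → g x ≠ g (x + k) := by
      intro k hk hkm x hxk hxeq
      exact Nat.find_min hQ (hm ▸ hkm) ⟨hk, x, hxk, hxeq⟩
    have hm1 : m ≠ 1 := by
      intro h1
      rw [h1] at ha'eq ha'n
      exact (hadj a' ha'n).ne ha'eq
    have hm2 : m ≠ 2 := by
      intro h2
      rw [h2] at ha'eq ha'n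
      have d1 := hg a' (by omega)
      have d2 := hg (a' + 1) (by rw [show a' + 1 + 1 = a' + 2 by omega]; omega)
      rw [show a' + 1 + 1 = a' + 2 by omega, ← ha'eq] at d2
      exact hD.1 _ _ ⟨d1, d2⟩
    have hm3 : 3 ≤ m := by omega
    -- path from g a' to g (a' + (m-1)) of length m-1
    obtain ⟨p, hplen, hpsupp⟩ := exists_walk_seg G g a' (a' + (m - 1)) (by omega)
      (fun i hi hib => hadj i (by omega))
    have hppath : p.IsPath := by
      rw [SimpleGraph.Walk.isPath_def, hpsupp]
      refine List.Nodup.map_on ?_ List.nodup_range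
      intro x hx y hy hxy
      rw [List.mem_range] at hx hy
      by_contra hne
      rcases Nat.lt_or_ge x y with h | h
      · exact hmin (y - x) (by omega) (by omega) (a' + x) (by omega)
          (by rw [show a' + x + (y - x) = a' + y by omega]; exact hxy)
      · have h' : y < x := by omega
        exact hmin (x - y) (by omega) (by omega) (a' + y) (by omega)
          (by rw [show a' + y + (x - y) = a' + x by omega]; exact hxy.symm)
    have hadj' : G.Adj (g a') (g (a' + (m - 1))) := by
      have := hadj (a' + (m - 1)) (by rw [show a' + (m - 1) + 1 = a' + m by omega]; omega)
      rw [show a' + (m - 1) + 1 = a' + m by omega, ← ha'eq] at this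
      exact this.symm
    set q : G.Walk (g a') (g (a' + (m - 1))) := SimpleGraph.Walk.cons hadj' SimpleGraph.Walk.nil
      with hqdef
    have hqpath : q.IsPath := by
      rw [hqdef]
      exact (SimpleGraph.Path.singleton hadj').2
    have hqlen : q.length = 1 := rfl
    have := egirth_le_two_paths p q hppath hqpath (by omega)
    have hge := hgirth.trans this
    rw [Nat.cast_le] at hge
    omega
  -- Step 3: exact distances along the chain in G
  have hedist : ∀ a b, a ≤ b → b < n → G.edist (g a) (g b) = ((b - a : ℕ) : ℕ∞) := by
    intro a b hab hbn
    obtain ⟨p, hplen, hpsupp⟩ := exists_walk_seg G g a b hab (hadjseg a b hbn)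
    have hub : G.edist (g a) (g b) ≤ ((b - a : ℕ) : ℕ∞) := by
      have := SimpleGraph.edist_le p
      rwa [hplen] at this
    refine le_antisymm hub ?_
    by_contra hlt
    push_neg at hlt
    have hne_top : G.edist (g a) (g b) ≠ ⊤ := (hlt.trans_le le_top).ne
    obtain ⟨w, hw⟩ := SimpleGraph.exists_walk_of_edist_ne_top hne_top
    have hwlen : (w.length : ℕ∞) < ((b - a : ℕ) : ℕ∞) := by rw [hw]; exact hlt
    rw [Nat.cast_lt] at hwlen
    set q := w.bypass with hq
    have hqpath : q.IsPath := w.bypass_isPath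
    have hqlen : q.length ≤ w.length := w.length_bypass_le
    have hppath : p.IsPath := by
      rw [SimpleGraph.Walk.isPath_def, hpsupp]
      refine List.Nodup.map_on ?_ List.nodup_range
      intro x hx y hy hxy
      rw [List.mem_range] at hx hy
      by_contra hne
      rcases Nat.lt_or_ge x y with h | h
      · exact hinj (a + x) (a + y) (by omega) (by omega) hxy
      · exact hinj (a + y) (a + x) (by omega) (by omega) hxy.symm
    have := egirth_le_two_paths p q hppath hqpath (by omega)
    have hge := hgirth.trans this
    rw [Nat.cast_le] at hge
    omega
  -- assemble f
  refine ⟨fun i => g i, ?_, ?_, ?_⟩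
  · intro i j hij
    by_contra hne
    rcases Nat.lt_or_ge (i : ℕ) (j : ℕ) with h | h
    · exact hinj i j h j.isLt hij
    · have h' : (j : ℕ) < (i : ℕ) := by
        rcases Nat.lt_or_ge (j : ℕ) (i : ℕ) with h' | h'
        · exact h'
        · exact absurd (Fin.ext (by omega)) hne
      exact hinj j i h' i.isLt hij.symm
  · intro u v
    constructor
    · intro huv
      have h := hg u (by rw [huv]; exact v.isLt)
      rwa [huv] at h
    · intro huv
      have hadjuv : G.Adj (g u) (g v) := (hD.2 _ _).mpr (Or.inl huv)
      have hne : (u : ℕ) ≠ (v : ℕ) := by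
        intro h
        have : g (u : ℕ) = g (v : ℕ) := by rw [h]
        exact hadjuv.ne this
      have hd1 : G.edist (g u) (g v) = 1 := SimpleGraph.edist_eq_one_iff_adj.mpr hadjuv
      rcases Nat.lt_or_ge (u : ℕ) (v : ℕ) with h | h
      · have := hedist u v (le_of_lt h) v.isLt
        rw [hd1] at this
        have hv : (v : ℕ) - (u : ℕ) = 1 := by exact_mod_cast this.symm
        show (u : ℕ) + 1 = (v : ℕ)
        omega
      · have h' : (v : ℕ) < (u : ℕ) := by omega
        have := hedist v u (le_of_lt h') u.isLt
        rw [SimpleGraph.edist_comm, hd1] at this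
        have hv : (u : ℕ) - (v : ℕ) = 1 := by exact_mod_cast this.symm
        have : (v : ℕ) + 1 = (u : ℕ) := by omega
        have hD2 := hg v (by rw [this]; exact u.isLt)
        rw [this] at hD2
        exact absurd ⟨huv, hD2⟩ (hD.1 _ _)
  · -- edist equality
    have hPadj : ∀ a b : Fin n, (SimpleGraph.fromRel (dirPath n)).Adj a b ↔
        ((a : ℕ) + 1 = (b : ℕ) ∨ (b : ℕ) + 1 = (a : ℕ)) := by
      intro a b
      rw [SimpleGraph.fromRel_adj]
      unfold dirPath
      constructor
      · rintro ⟨-, h⟩; exact h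
      · intro h
        refine ⟨?_, h⟩
        intro hab
        rw [hab] at h
        omega
    have hPdist : ∀ a b : Fin n, (a : ℕ) ≤ (b : ℕ) →
        (SimpleGraph.fromRel (dirPath n)).edist a b = (((b : ℕ) - (a : ℕ) : ℕ) : ℕ∞) := by
      intro a b hab
      set H := SimpleGraph.fromRel (dirPath n) with hH
      set e : ℕ → Fin n := fun t => ⟨min ((a : ℕ) + t) (b : ℕ), by omega⟩ with he
      have hestep : ∀ i, i < (b : ℕ) - (a : ℕ) → H.Adj (e i) (e (i + 1)) := by
        intro i hi
        rw [hPadj]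
        left
        show min ((a : ℕ) + i) (b : ℕ) + 1 = min ((a : ℕ) + (i + 1)) (b : ℕ)
        omega
      obtain ⟨p, hplen, -⟩ := exists_walk_seg H e 0 ((b : ℕ) - (a : ℕ)) (by omega)
        (fun i _ hi => hestep i hi)
      have hea : e 0 = a := by rw [he]; exact Fin.ext (by simp; omega)
      have heb : e ((b : ℕ) - (a : ℕ)) = b := by rw [he]; exact Fin.ext (by simp; omega)
      have hub : H.edist a b ≤ (((b : ℕ) - (a : ℕ) : ℕ) : ℕ∞) := by
        have := SimpleGraph.edist_le (p.copy hea heb)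
        rwa [SimpleGraph.Walk.length_copy, hplen, Nat.sub_zero] at this
      refine le_antisymm hub ?_
      have hlb := le_edist_of_potential (H := H) (fun i => ((i : ℕ) : ℤ))
        (by
          intro x y hxy
          rw [hPadj] at hxy
          show (((x : ℕ) : ℤ) - ((y : ℕ) : ℤ)).natAbs ≤ 1
          omega) a b
      have : (((a : ℕ) : ℤ) - ((b : ℕ) : ℤ)).natAbs = (b : ℕ) - (a : ℕ) := by omega
      rwa [this] at hlb
    intro u v
    rcases le_or_gt (u : ℕ) (v : ℕ) with h | h
    · rw [hPdist u v h, hedist u v h v.isLt]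
    · rw [SimpleGraph.edist_comm, SimpleGraph.edist_comm (G := G),
        hPdist v u (le_of_lt h), hedist v u (le_of_lt h) u.isLt]
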